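/- Let A = (a_{ij}) be an n×n complex matrix. Then for every diagonal index k one has |a_{kk}| ≤ max_{λ ∈ σ(A)} |λ| + 2√(n(n−1)) · ‖J ∘ A‖, where σ(A) is the set of eigenvalues of A. -/

import Mathlib

open Matrix

/-- The Frobenius norm of a complex matrix. -/
noncomputable def frob {n : ℕ} (A : Matrix (Fin n) (Fin n) ℂ) : ℝ :=
  Real.sqrt (∑ i, ∑ j, ‖A i j‖ ^ 2)

/-- The off-diagonal part `J ∘ A` of a matrix (Hadamard product with the matrix `J`
having zeros on the diagonal and ones elsewhere). -/
def offDiag' {n : ℕ} (A : Matrix (Fin n) (Fin n) ℂ) : Matrix (Fin n) (Fin n) ℂ :=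
  fun i j => if i = j then 0 else A i j

section AuxSection
open Polynomial Metric Set

namespace AbsDiagAux

lemma eval_charpoly' {n : ℕ} (M : Matrix (Fin n) (Fin n) ℂ) (μ : ℂ) :
    M.charpoly.eval μ = det (μ • (1 : Matrix (Fin n) (Fin n) ℂ) - M) := by
  rw [Matrix.charpoly, ← Polynomial.coe_evalRingHom, RingHom.map_det]
  congr 1
  ext i j
  by_cases h : i = j <;>
    simp [h, Matrix.charmatrix_apply, Matrix.one_apply, Matrix.diagonal_apply]

lemma mem_spectrum_of_det {n : ℕ} {M : Matrix (Fin n) (Fin n) ℂ} {μ : ℂ}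
    (h : det (μ • (1 : Matrix (Fin n) (Fin n) ℂ) - M) = 0) : μ ∈ spectrum ℂ M := by
  rw [spectrum.mem_iff, Algebra.algebraMap_eq_smul_one]
  intro hU
  rw [Matrix.isUnit_iff_isUnit_det, h] at hU
  exact not_isUnit_zero hU

lemma spectrum_subset_roots {n : ℕ} (M : Matrix (Fin n) (Fin n) ℂ) :
    spectrum ℂ M ⊆ {x | M.charpoly.IsRoot x} := by
  intro μ hμ
  rw [spectrum.mem_iff, Algebra.algebraMap_eq_smul_one] at hμ
  have hdet : det (μ • (1 : Matrix (Fin n) (Fin n) ℂ) - M) = 0 := by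
    by_contra hd
    exact hμ ((Matrix.isUnit_iff_isUnit_det _).2 (isUnit_iff_ne_zero.2 hd))
  simpa [Polynomial.IsRoot, eval_charpoly'] using hdet

lemma gersh {n : ℕ} {M : Matrix (Fin n) (Fin n) ℂ} {μ : ℂ}
    (h : det (μ • (1 : Matrix (Fin n) (Fin n) ℂ) - M) = 0) :
    ∃ i, dist μ (M i i) ≤ ∑ j ∈ Finset.univ.erase i, ‖M i j‖ := by
  obtain ⟨v, hv0, hv⟩ := Matrix.exists_mulVec_eq_zero_iff.mpr h
  have hE : Module.End.HasEigenvalue (Matrix.toLin' M) μ := by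
    apply Module.End.hasEigenvalue_of_hasEigenvector (x := v)
    refine ⟨Module.End.mem_eigenspace_iff.mpr ?_, hv0⟩
    rw [Matrix.toLin'_apply]
    have hv' : μ • v - M *ᵥ v = 0 := by
      rw [← hv, Matrix.sub_mulVec, Matrix.smul_mulVec, Matrix.one_mulVec]
    have := sub_eq_zero.mp hv'
    exact this.symm
  obtain ⟨i, hi⟩ := eigenvalue_mem_ball hE
  exact ⟨i, Metric.mem_closedBall.mp hi⟩

lemma pow_card_le_prod_multiset {s : Multiset ℝ} {ε : ℝ} (hε : 0 ≤ ε)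
    (h : ∀ x ∈ s, ε ≤ x) : ε ^ (Multiset.card s) ≤ s.prod := by
  induction s using Multiset.induction with
  | empty => simp
  | cons a s ih =>
    have h1 := ih (fun x hx => h x (Multiset.mem_cons_of_mem hx))
    have h2 := h a (Multiset.mem_cons_self a s)
    have h3 : (0:ℝ) ≤ s.prod := le_trans (pow_nonneg hε _) h1
    calc ε ^ Multiset.card (a ::ₘ s) = ε ^ Multiset.card s * ε := by
          rw [Multiset.card_cons, pow_succ]
      _ ≤ s.prod * a := mul_le_mul h1 h2 hε h3
      _ = (a ::ₘ s).prod := by rw [Multiset.prod_cons, mul_comm]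

lemma exists_root_near {n : ℕ} (M : Matrix (Fin n) (Fin n) ℂ) (z : ℂ)
    {ε : ℝ} (hε : 0 < ε)
    (h : ‖det (z • (1 : Matrix (Fin n) (Fin n) ℂ) - M)‖ < ε ^ n) :
    ∃ μ, det (μ • (1 : Matrix (Fin n) (Fin n) ℂ) - M) = 0 ∧ dist z μ ≤ ε := by
  by_contra hc
  push_neg at hc
  have hsp : M.charpoly.Splits := IsAlgClosed.splits _
  have hmonic := M.charpoly_monic
  have hfact := hsp.eq_prod_roots_of_monic hmonic
  have hcard : Multiset.card M.charpoly.roots = n := by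
    rw [Polynomial.splits_iff_card_roots.mp hsp, Matrix.charpoly_natDegree_eq_dim,
      Fintype.card_fin]
  have hnormprod : ∀ s : Multiset ℂ, ‖s.prod‖ = (s.map fun w => ‖w‖).prod := by
    intro s
    induction s using Multiset.induction with
    | empty => simp
    | cons a s ih => simp [norm_mul, ih]
  have heval : ‖M.charpoly.eval z‖ = ((M.charpoly.roots.map fun a => ‖z - a‖)).prod := by
    conv_lhs => rw [hfact]
    rw [Polynomial.eval_multiset_prod, Multiset.map_map, hnormprod, Multiset.map_map]
    simp [Function.comp]
  have hge' : ε ^ Multiset.card (M.charpoly.roots.map fun a => ‖z - a‖) ≤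
      ((M.charpoly.roots.map fun a => ‖z - a‖)).prod := by
    apply pow_card_le_prod_multiset hε.le
    intro x hx
    obtain ⟨a, ha, rfl⟩ := Multiset.mem_map.mp hx
    have haroot : M.charpoly.IsRoot a :=
      (Polynomial.mem_roots hmonic.ne_zero).mp ha
    have hadet : det (a • (1 : Matrix (Fin n) (Fin n) ℂ) - M) = 0 := by
      rw [← eval_charpoly']; exact haroot
    have := hc a hadet
    rw [Complex.dist_eq] at this
    exact this.le
  rw [Multiset.card_map, hcard] at hge'
  rw [← heval, eval_charpoly'] at hge'
  linarith

lemma walk_sum_bound {n : ℕ} (d : Fin n → ℂ) (Rr : Fin n → ℝ)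
    {G : SimpleGraph (Fin n)}
    (hadj : ∀ i j, G.Adj i j → dist (d i) (d j) ≤ Rr i + Rr j)
    {i j : Fin n} (p : G.Walk i j) :
    dist (d i) (d j) ≤ (p.support.map (fun x => 2 * Rr x)).sum - Rr i - Rr j := by
  induction p with
  | nil =>
    simp only [SimpleGraph.Walk.support_nil, List.map_cons, List.map_nil, List.sum_cons,
      List.sum_nil, add_zero, dist_self]
    linarith
  | @cons u v w h p ih =>
    have h1 := hadj _ _ h
    have h2 := dist_triangle (d u) (d v) (d w)
    simp only [SimpleGraph.Walk.support_cons, List.map_cons, List.sum_cons]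
    linarith

lemma reach_bound {n : ℕ} (d : Fin n → ℂ) (Rr : Fin n → ℝ) (hR : ∀ i, 0 ≤ Rr i)
    {G : SimpleGraph (Fin n)}
    (hadj : ∀ i j, G.Adj i j → dist (d i) (d j) ≤ Rr i + Rr j)
    {i j : Fin n} (h : G.Reachable i j) :
    dist (d i) (d j) ≤ 2 * (∑ x, Rr x) - Rr i - Rr j := by
  obtain ⟨p⟩ := h
  have hb := walk_sum_bound d Rr hadj p.bypass
  have hnd : p.bypass.support.Nodup := p.bypass_isPath.support_nodup
  have hsum : (p.bypass.support.map fun x => 2 * Rr x).sum ≤ 2 * ∑ x, Rr x := by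
    rw [← List.sum_toFinset _ hnd]
    calc ∑ x ∈ p.bypass.support.toFinset, 2 * Rr x ≤ ∑ x : Fin n, 2 * Rr x :=
        Finset.sum_le_sum_of_subset_of_nonneg (Finset.subset_univ _)
          (fun x _ _ => by have := hR x; linarith)
      _ = 2 * ∑ x, Rr x := by rw [Finset.mul_sum]
  linarith



lemma exists_eigen_near {n : ℕ} (A : Matrix (Fin n) (Fin n) ℂ) (k : Fin n) :
    ∃ μ : ℂ, det (μ • (1 : Matrix (Fin n) (Fin n) ℂ) - A) = 0 ∧
      dist μ (A k k) ≤ 2 * ∑ i, ∑ j ∈ Finset.univ.erase i, ‖A i j‖ := by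
  classical
  let d : Fin n → ℂ := fun i => A i i
  let Rr : Fin n → ℝ := fun i => ∑ j ∈ Finset.univ.erase i, ‖A i j‖
  have hRr0 : ∀ i, 0 ≤ Rr i := fun i => Finset.sum_nonneg fun j _ => norm_nonneg _
  let Mt : ℝ → Matrix (Fin n) (Fin n) ℂ :=
    fun t => Matrix.of fun i j => if i = j then A i i else (t : ℂ) * A i j
  have hMt1 : Mt 1 = A := by
    ext i j
    by_cases h : i = j <;> simp [Mt, h]
  have gershMt : ∀ t ∈ Icc (0:ℝ) 1, ∀ μ : ℂ,
      det (μ • (1 : Matrix (Fin n) (Fin n) ℂ) - Mt t) = 0 →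
      ∃ i, μ ∈ Metric.closedBall (d i) (Rr i) := by
    intro t ht μ hμ
    obtain ⟨i, hi⟩ := gersh hμ
    refine ⟨i, Metric.mem_closedBall.mpr ?_⟩
    have hdiag : Mt t i i = d i := by simp [Mt, d]
    rw [hdiag] at hi
    refine hi.trans (Finset.sum_le_sum fun j hj => ?_)
    have hne : i ≠ j := fun h => (Finset.mem_erase.mp hj).1 h.symm
    have hoff : Mt t i j = (t:ℂ) * A i j := by simp [Mt, hne]
    rw [hoff, norm_mul, Complex.norm_real]
    have h1 : ‖(t:ℝ)‖ ≤ 1 := by rw [Real.norm_eq_abs, abs_of_nonneg ht.1]; exact ht.2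
    exact mul_le_of_le_one_left (norm_nonneg _) h1
  let G : SimpleGraph (Fin n) :=
    { Adj := fun i j => i ≠ j ∧
        (Metric.closedBall (d i) (Rr i) ∩ Metric.closedBall (d j) (Rr j)).Nonempty
      symm := by
        constructor
        rintro i j ⟨hne, hint⟩
        exact ⟨hne.symm, by rwa [Set.inter_comm]⟩
      loopless := ⟨fun i h => h.1 rfl⟩ }
  have hadj : ∀ i j, G.Adj i j → dist (d i) (d j) ≤ Rr i + Rr j := by
    rintro i j ⟨-, z, hz1, hz2⟩
    rw [Metric.mem_closedBall] at hz1 hz2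
    calc dist (d i) (d j) ≤ dist (d i) z + dist z (d j) := dist_triangle _ _ _
      _ ≤ Rr i + Rr j := by
          rw [dist_comm (d i) z]
          exact add_le_add hz1 hz2
  let US : Set ℂ := ⋃ i ∈ {i | G.Reachable k i}, Metric.closedBall (d i) (Rr i)
  let UF : Set ℂ := ⋃ i ∈ {i | ¬ G.Reachable k i}, Metric.closedBall (d i) (Rr i)
  have hUSc : IsCompact US :=
    (Set.toFinite _).isCompact_biUnion fun i _ => isCompact_closedBall _ _
  have hUFc : IsCompact UF :=
    (Set.toFinite _).isCompact_biUnion fun i _ => isCompact_closedBall _ _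
  have hdisjoint : Disjoint US UF := by
    rw [Set.disjoint_left]
    rintro z hz1 hz2
    obtain ⟨i, hi, hzi⟩ := Set.mem_iUnion₂.mp hz1
    obtain ⟨j, hj, hzj⟩ := Set.mem_iUnion₂.mp hz2
    apply hj
    rcases eq_or_ne i j with rfl | hne
    · exact hi
    · exact hi.trans (SimpleGraph.Adj.reachable ⟨hne, z, hzi, hzj⟩)
  obtain ⟨δ, hδ, hth⟩ := hdisjoint.exists_thickenings hUSc hUFc.isClosed
  have hcont : Continuous (fun p : ℝ × ℂ =>
      det (p.2 • (1 : Matrix (Fin n) (Fin n) ℂ) - Mt p.1)) := by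
    apply Continuous.matrix_det
    apply continuous_matrix
    intro i j
    simp only [Matrix.sub_apply, Matrix.smul_apply, Matrix.one_apply, Matrix.of_apply,
      smul_eq_mul, Mt]
    by_cases h : i = j <;> simp only [h, if_true, if_false] <;> fun_prop
  let T : Set ℝ := {t | t ∈ Icc (0:ℝ) 1 ∧ ∃ μ ∈ US,
      det (μ • (1 : Matrix (Fin n) (Fin n) ℂ) - Mt t) = 0}
  have hTcompact : IsCompact T := by
    have hTeq : T = Prod.fst '' {p : ℝ × ℂ | p ∈ Icc (0:ℝ) 1 ×ˢ US ∧
        det (p.2 • (1 : Matrix (Fin n) (Fin n) ℂ) - Mt p.1) = 0} := by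
      ext t
      constructor
      · rintro ⟨ht, μ, hμ, h0⟩
        exact ⟨(t, μ), ⟨Set.mk_mem_prod ht hμ, h0⟩, rfl⟩
      · rintro ⟨⟨t', μ⟩, ⟨⟨ht, hμ⟩, h0⟩, rfl⟩
        exact ⟨ht, μ, hμ, h0⟩
    rw [hTeq]
    apply IsCompact.image _ continuous_fst
    exact (isCompact_Icc.prod hUSc).inter_right (isClosed_singleton.preimage hcont)
  have h0T : (0:ℝ) ∈ T := by
    refine ⟨⟨le_refl 0, zero_le_one⟩, d k, ?_, ?_⟩
    · exact Set.mem_biUnion (SimpleGraph.Reachable.refl k)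
        (Metric.mem_closedBall_self (hRr0 k))
    · have h1 : (d k • (1 : Matrix (Fin n) (Fin n) ℂ) - Mt 0) =
          Matrix.diagonal (fun i => d k - d i) := by
        ext i j
        by_cases h : i = j <;>
          simp [Mt, d, h, Matrix.diagonal, Matrix.one_apply]
      rw [h1, Matrix.det_diagonal]
      exact Finset.prod_eq_zero (Finset.mem_univ k) (sub_self _)
  have hopen' : ∀ t : ℝ, ∃ ε : ℝ, 0 < ε ∧
      (t ∈ T → ∀ s ∈ Icc (0:ℝ) 1, dist s t < ε → s ∈ T) := by
    intro t
    by_cases ht : t ∈ T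
    swap
    · exact ⟨1, one_pos, fun h => absurd h ht⟩
    obtain ⟨ht01, μ0, hμ0, hdet0⟩ := ht
    have hcontf : Continuous (fun s : ℝ =>
        ‖det (μ0 • (1 : Matrix (Fin n) (Fin n) ℂ) - Mt s)‖) :=
      (hcont.comp (continuous_id.prodMk continuous_const)).norm
    have hopen0 : IsOpen {s : ℝ |
        ‖det (μ0 • (1 : Matrix (Fin n) (Fin n) ℂ) - Mt s)‖ < (δ/2) ^ n} :=
      isOpen_lt hcontf continuous_const
    have ht0 : t ∈ {s : ℝ |
        ‖det (μ0 • (1 : Matrix (Fin n) (Fin n) ℂ) - Mt s)‖ < (δ/2) ^ n} := by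
      simp only [Set.mem_setOf_eq, hdet0, norm_zero]
      positivity
    obtain ⟨ε, hε, hball⟩ := Metric.isOpen_iff.mp hopen0 t ht0
    refine ⟨ε, hε, fun _ s hs hdist => ?_⟩
    have hfs := hball hdist
    obtain ⟨μ, hμdet, hμdist⟩ :=
      exists_root_near (Mt s) μ0 (by positivity : (0:ℝ) < δ/2) hfs
    obtain ⟨i, hiball⟩ := gershMt s hs μ hμdet
    have hμUS : μ ∈ US := by
      by_cases hreach : G.Reachable k i
      · exact Set.mem_biUnion hreach hiball
      · exfalso
        have hμUF : μ ∈ UF := Set.mem_biUnion hreach hiball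
        have h1 : μ ∈ Metric.thickening δ US :=
          Metric.mem_thickening_iff.mpr ⟨μ0, hμ0, by
            have hcomm : dist μ μ0 ≤ δ/2 := by rw [dist_comm]; exact hμdist
            linarith⟩
        have h2 : μ ∈ Metric.thickening δ UF :=
          Metric.self_subset_thickening hδ _ hμUF
        exact Set.disjoint_left.mp hth h1 h2
    exact ⟨hs, μ, hμUS, hμdet⟩
  choose ε hεpos hεT using hopen'
  let u : Set ℝ := ⋃ t ∈ T, Metric.ball t (ε t)
  have hu_open : IsOpen u := isOpen_biUnion fun _ _ => Metric.isOpen_ball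
  have hv_open : IsOpen Tᶜ := hTcompact.isClosed.isOpen_compl
  have h1T : (1:ℝ) ∈ T := by
    by_contra h1T
    have hsub : Icc (0:ℝ) 1 ⊆ u ∪ Tᶜ := by
      intro s hs
      by_cases h : s ∈ T
      · exact Or.inl (Set.mem_biUnion h (Metric.mem_ball_self (hεpos s)))
      · exact Or.inr h
    have hne1 : (Icc (0:ℝ) 1 ∩ u).Nonempty :=
      ⟨0, ⟨le_refl 0, zero_le_one⟩, Set.mem_biUnion h0T (Metric.mem_ball_self (hεpos 0))⟩
    have hne2 : (Icc (0:ℝ) 1 ∩ Tᶜ).Nonempty := ⟨1, ⟨zero_le_one, le_refl 1⟩, h1T⟩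
    obtain ⟨s, hs, hsu, hsT⟩ := isPreconnected_Icc u Tᶜ hu_open hv_open hsub hne1 hne2
    obtain ⟨t, htT, hst⟩ := Set.mem_iUnion₂.mp hsu
    exact hsT (hεT t htT s hs (Metric.mem_ball.mp hst))
  obtain ⟨-, μ, hμUS, hdet⟩ := h1T
  rw [hMt1] at hdet
  refine ⟨μ, hdet, ?_⟩
  obtain ⟨i, hreach, hball⟩ := Set.mem_iUnion₂.mp hμUS
  have hdk : dist (d k) (d i) ≤ 2 * (∑ x, Rr x) - Rr k - Rr i :=
    reach_bound d Rr hRr0 hadj hreach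
  have h1 : dist μ (d k) ≤ dist μ (d i) + dist (d i) (d k) := dist_triangle _ _ _
  have h2 : dist μ (d i) ≤ Rr i := Metric.mem_closedBall.mp hball
  have h3 : dist (d i) (d k) = dist (d k) (d i) := dist_comm _ _
  have hRk := hRr0 k
  have hfin : dist μ (d k) ≤ 2 * (∑ x, Rr x) := by linarith
  exact hfin

end AbsDiagAux

end AuxSection

/-- for every diagonal index `k`,
`|a_kk| ≤ max_{λ∈σ(A)} |λ| + 2√(n(n-1)) ‖J ∘ A‖`. -/
theorem abs_diag_le {n : ℕ} (A : Matrix (Fin n) (Fin n) ℂ) (k : Fin n) :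
    ‖A k k‖ ≤ sSup ((fun μ : ℂ => ‖μ‖) '' spectrum ℂ A) +
      2 * Real.sqrt (n * (n - 1)) * frob (offDiag' A) := by
  classical
  obtain ⟨μ, hdet, hdist⟩ := AbsDiagAux.exists_eigen_near A k
  have hspec : μ ∈ spectrum ℂ A := AbsDiagAux.mem_spectrum_of_det hdet
  have hfin : (spectrum ℂ A).Finite :=
    (Polynomial.finite_setOf_isRoot (Matrix.charpoly_monic A).ne_zero).subset
      (AbsDiagAux.spectrum_subset_roots A)
  have hbdd : BddAbove ((fun μ : ℂ => ‖μ‖) '' spectrum ℂ A) := (hfin.image _).bddAbove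
  have hμle : ‖μ‖ ≤ sSup ((fun μ : ℂ => ‖μ‖) '' spectrum ℂ A) :=
    le_csSup hbdd ⟨μ, hspec, rfl⟩
  -- Cauchy-Schwarz part
  set N := offDiag' A with hN
  have hNd : ∀ i, N i i = 0 := fun i => by simp [hN, offDiag']
  have hNo : ∀ i j, i ≠ j → N i j = A i j := fun i j h => by simp [hN, offDiag', h]
  set s : Finset ((Fin n) × (Fin n)) := Finset.univ.offDiag with hs
  have hr1 : (∑ i, ∑ j ∈ Finset.univ.erase i, ‖A i j‖) = ∑ p ∈ s, ‖N p.1 p.2‖ := by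
    have h2 : ∀ i : Fin n, ∑ j ∈ Finset.univ.erase i, ‖A i j‖ = ∑ j, ‖N i j‖ := by
      intro i
      rw [← Finset.sum_erase (a := i) Finset.univ (f := fun j => ‖N i j‖) (by simp [hNd i])]
      apply Finset.sum_congr rfl
      intro j hj
      have hij : i ≠ j := fun h => (Finset.mem_erase.mp hj).1 h.symm
      rw [hNo i j hij]
    have hdiag0 : ∑ p ∈ (Finset.univ : Finset (Fin n)).diag, ‖N p.1 p.2‖ = 0 :=
      Finset.sum_eq_zero fun p hp => by
        have h12 := (Finset.mem_diag.mp hp).2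
        simp [← h12, hNd]
    calc (∑ i, ∑ j ∈ Finset.univ.erase i, ‖A i j‖) = ∑ i, ∑ j, ‖N i j‖ :=
          Finset.sum_congr rfl fun i _ => h2 i
      _ = ∑ p ∈ Finset.univ ×ˢ Finset.univ, ‖N p.1 p.2‖ := by
          rw [Finset.sum_product]
      _ = ∑ p ∈ s, ‖N p.1 p.2‖ := by
          rw [← Finset.diag_union_offDiag (Finset.univ : Finset (Fin n)),
            Finset.sum_union (Finset.disjoint_diag_offDiag _), hdiag0, zero_add]
  have hfrob : frob N = Real.sqrt (∑ p ∈ s, ‖N p.1 p.2‖ ^ 2) := by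
    rw [frob]
    congr 1
    have hdiag0 : ∑ p ∈ (Finset.univ : Finset (Fin n)).diag, ‖N p.1 p.2‖ ^ 2 = 0 :=
      Finset.sum_eq_zero fun p hp => by
        have h12 := (Finset.mem_diag.mp hp).2
        simp [← h12, hNd]
    calc (∑ i, ∑ j, ‖N i j‖ ^ 2) = ∑ p ∈ Finset.univ ×ˢ Finset.univ, ‖N p.1 p.2‖ ^ 2 := by
          rw [Finset.sum_product]
      _ = ∑ p ∈ s, ‖N p.1 p.2‖ ^ 2 := by
          rw [← Finset.diag_union_offDiag (Finset.univ : Finset (Fin n)),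
            Finset.sum_union (Finset.disjoint_diag_offDiag _), hdiag0, zero_add]
  have hcard : ((s.card : ℕ) : ℝ) = (n : ℝ) * ((n : ℝ) - 1) := by
    have hc : s.card = n * n - n := by
      rw [hs, Finset.offDiag_card]
      simp [Finset.card_univ]
    rw [hc, Nat.cast_sub (by rcases Nat.eq_zero_or_pos n with h | h
                             · simp [h]
                             · exact Nat.le_mul_of_pos_left n h)]
    push_cast
    ring
  have hsq := sq_sum_le_card_mul_sum_sq (s := s) (f := fun p => ‖N p.1 p.2‖)
  have hnonneg : 0 ≤ ∑ p ∈ s, ‖N p.1 p.2‖ := Finset.sum_nonneg fun p _ => norm_nonneg _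
  have h5 : (∑ p ∈ s, ‖N p.1 p.2‖) ≤
      Real.sqrt ((s.card : ℝ) * ∑ p ∈ s, ‖N p.1 p.2‖ ^ 2) := by
    have h6 := Real.sqrt_le_sqrt hsq
    rwa [Real.sqrt_sq hnonneg] at h6
  rw [Real.sqrt_mul (by positivity) _] at h5
  have hCS : (∑ i, ∑ j ∈ Finset.univ.erase i, ‖A i j‖) ≤
      Real.sqrt ((n : ℝ) * ((n : ℝ) - 1)) * frob N := by
    rw [hr1, hfrob, ← hcard]
    exact h5
  have htri : ‖A k k‖ ≤ ‖μ‖ + dist μ (A k k) := by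
    rw [dist_eq_norm]
    calc ‖A k k‖ = ‖μ - (μ - A k k)‖ := by ring_nf
      _ ≤ ‖μ‖ + ‖μ - A k k‖ := norm_sub_le _ _
  rw [mul_assoc]
  linarith
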